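/- Let E be a Drinfeld module of rank 2 over a DVR R with φ_E(t)(x) = π x + a x^q + x^{q²}, where t is irreducible of degree f in A = F_q[v] and q ≥ 3. Then in Ext_A(E, Ĝ_a) one has the relation τ^{i+1} ≡ (−1)^i a^{(q^i − 1)/(q−1)} τ^1 mod π for all i ≥ 0, where the relations in Ext are generated by π τ^j ≡ τ^j ∘ (π τ^0 + a τ^1 + τ^2) for j ≥ 0. -/

import Mathlib

/-- Multiplication (= composition) in the twisted restricted power series ring `R{τ}^`
with `τ b = b^q τ`. -/
def tcomp (R : Type*) [CommRing R] (q : ℕ) (f g : ℕ → R) : ℕ → R :=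
  fun n => ∑ i ∈ Finset.range (n + 1), f i * (g (n - i)) ^ q ^ i

lemma tcomp_delta (R : Type*) [CommRing R] (q : ℕ) (g : ℕ → R) (j n : ℕ) :
    tcomp R q (fun m => if m = j then (1 : R) else 0) g n
      = if j ≤ n then g (n - j) ^ q ^ j else 0 := by
  unfold tcomp
  simp only [ite_mul, one_mul, zero_mul]
  rw [Finset.sum_ite_eq' (Finset.range (n + 1)) j]
  simp [Nat.lt_succ_iff]

lemma tcomp_lin (R : Type*) [CommRing R] (q : ℕ) (c : R) (f f' g : ℕ → R) (n : ℕ) :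
    tcomp R q (fun m => -(f m + c * f' m)) g n
      = -(tcomp R q f g n + c * tcomp R q f' g n) := by
  unfold tcomp
  rw [Finset.mul_sum, ← Finset.sum_add_distrib, ← Finset.sum_neg_distrib]
  congr 1; funext j; ring

/-- The relation (tauj): let `E` be a rank-2 Drinfeld module over a DVR `R` with
`φ_E(t)(x) = π x + a x^q + x^(q²)` and `q ≥ 3`.  In `Ext_A(E, Ĝₐ)`, the quotient of
`R{τ}^` by the inner derivations `π α - α ∘ φ_E(t)`, one has
`τ^(i+1) ≡ (-1)^i a^((q^i - 1)/(q - 1)) τ^1 mod π` for all `i ≥ 0`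
(the exponent being the geometric sum `Σ_{k<i} q^k`); i.e. the difference is an inner
derivation plus a multiple of `π`. -/
theorem stmt19 (R : Type*) [CommRing R] [IsDomain R] [IsDiscreteValuationRing R]
    (π : R) (hπ : Irreducible π)
    (q : ℕ) (hq : 3 ≤ q) (a : R)
    (φt : ℕ → R)
    (hφt : φt = fun n => if n = 0 then π else if n = 1 then a else if n = 2 then 1 else 0)
    (i : ℕ) :
    ∃ α β : ℕ → R,
      ((fun n => if n = i + 1 then (1 : R) else 0)
          - ((-1 : R) ^ i * a ^ (∑ k ∈ Finset.range i, q ^ k)) •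
              (fun n => if n = 1 then (1 : R) else 0))
        = (fun n => π * α n - tcomp R q α φt n) + π • β := by
  induction i with
  | zero =>
    refine ⟨0, 0, ?_⟩
    funext n
    simp [tcomp]
  | succ i ih =>
    obtain ⟨α, β, hIH⟩ := ih
    set c : R := (-1 : R) ^ i * a ^ (∑ k ∈ Finset.range i, q ^ k) with hc
    clear_value c
    have hqi : 1 ≤ q ^ i := Nat.one_le_pow _ _ (by omega)
    have hπpow : π * π ^ (q ^ i - 1) = π ^ q ^ i := by
      rw [← pow_succ']; congr 1; omega
    refine ⟨fun m => -((if m = i then (1:R) else 0) + a ^ q ^ i * α m),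
            fun m => (1 - π ^ (q ^ i - 1)) * (if m = i then (1:R) else 0)
              - a ^ q ^ i * β m, ?_⟩
    funext n
    have h := congrFun hIH n
    simp only [Pi.add_apply, Pi.sub_apply, Pi.smul_apply, smul_eq_mul] at h ⊢
    rw [tcomp_lin, tcomp_delta]
    have hcsucc : (-1 : R) ^ (i+1) * a ^ (∑ k ∈ Finset.range (i+1), q ^ k)
        = -(a ^ q ^ i * c) := by
      rw [hc, Finset.sum_range_succ, pow_add, pow_succ]
      ring
    rw [hcsucc]
    -- solve for tcomp α φt n from h
    have hT : tcomp R q α φt n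
        = π * α n + π * β n - ((if n = i + 1 then (1:R) else 0) - c * (if n = 1 then (1:R) else 0)) := by
      linear_combination h
    rw [hT, hφt]
    have hq0 : q ^ i ≠ 0 := by positivity
    beta_reduce
    split_ifs <;>
      (try simp only [one_pow, zero_pow hq0]) <;>
      first
        | (exfalso; omega)
        | ring1
        | linear_combination hπpow
        | linear_combination (-1 : R) * hπpow
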